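/- Let C be a Levi category and suppose that x = a₁a₂⋯a_m = b₁b₂⋯b_n where all the a_i and b_j are atoms. Then: (i) m = n; (ii) there exist invertible arrows g₁, …, g_{n−1} such that a₁ = b₁g₁, a_i = g_{i−1}⁻¹ b_i g_i for 2 ≤ i ≤ n−1, and a_n = g_{n−1}⁻¹ b_n. -/

import Mathlib

open CategoryTheory

universe v u

variable {C : Type u} [Category.{v} C]

/-- The set of all arrows of a category, as a sigma type. -/
abbrev CatArr (C : Type u) [Category.{v} C] : Type (max u v) := Σ (X : C) (Y : C), X ⟶ Y

/-- An arrow is an atom if it is not invertible and in any factorization one factor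
is invertible. -/
def IsAtomArrow {X Y : C} (a : X ⟶ Y) : Prop :=
  ¬ IsIso a ∧ ∀ ⦃Z : C⦄ (b : X ⟶ Z) (c : Z ⟶ Y), a = b ≫ c → IsIso b ∨ IsIso c

/-- The principal right ideal `aC` generated by an arrow `a`. -/
def rIdeal {X Y : C} (a : X ⟶ Y) : Set (CatArr C) :=
  { p | ∃ (Z : C) (b : Y ⟶ Z), p = ⟨X, Z, a ≫ b⟩ }

/-- The principal left ideal `Ca` generated by an arrow `a`. -/
def lIdeal {X Y : C} (a : X ⟶ Y) : Set (CatArr C) :=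
  { p | ∃ (Z : C) (b : Z ⟶ X), p = ⟨Z, Y, b ≫ a⟩ }

/-- The principal two-sided ideal `CaC` generated by an arrow `a`. -/
def twoIdeal {X Y : C} (a : X ⟶ Y) : Set (CatArr C) :=
  { p | ∃ (W Z : C) (b : W ⟶ X) (c : Y ⟶ Z), p = ⟨W, Z, b ≫ a ≫ c⟩ }

/-- A category is left cancellative if `ax = ay` implies `x = y`. -/
def LeftCancellativeCat (C : Type u) [Category.{v} C] : Prop :=
  ∀ ⦃X Y Z : C⦄ (a : X ⟶ Y) (x y : Y ⟶ Z), a ≫ x = a ≫ y → x = y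

/-- A category is right cancellative if `xa = ya` implies `x = y`. -/
def RightCancellativeCat (C : Type u) [Category.{v} C] : Prop :=
  ∀ ⦃X Y Z : C⦄ (x y : X ⟶ Y) (a : Y ⟶ Z), x ≫ a = y ≫ a → x = y

/-- A category is right rigid if principal right ideals that intersect are comparable. -/
def RightRigid (C : Type u) [Category.{v} C] : Prop :=
  ∀ ⦃X Y X' Y' : C⦄ (a : X ⟶ Y) (b : X' ⟶ Y'),
    (rIdeal a ∩ rIdeal b).Nonempty → rIdeal a ⊆ rIdeal b ∨ rIdeal b ⊆ rIdeal a

/-- A category is equidivisible if every equality `ab = cd` admits an intermediate arrow. -/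
def Equidivisible (C : Type u) [Category.{v} C] : Prop :=
  ∀ ⦃W X Y Z : C⦄ (a : W ⟶ X) (b : X ⟶ Z) (c : W ⟶ Y) (d : Y ⟶ Z),
    a ≫ b = c ≫ d →
      (∃ u : Y ⟶ X, a = c ≫ u ∧ d = u ≫ b) ∨ (∃ v : X ⟶ Y, c = a ≫ v ∧ b = v ≫ d)

/-- A length functor on a category: additive on composition, zero exactly on invertible
arrows, one exactly on atoms. -/
structure LengthFunctor (C : Type u) [Category.{v} C] where
  len : ∀ ⦃X Y : C⦄, (X ⟶ Y) → ℕ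
  len_comp : ∀ ⦃X Y Z : C⦄ (f : X ⟶ Y) (g : Y ⟶ Z), len (f ≫ g) = len f + len g
  len_eq_zero_iff : ∀ ⦃X Y : C⦄ (f : X ⟶ Y), len f = 0 ↔ IsIso f
  len_eq_one_iff : ∀ ⦃X Y : C⦄ (f : X ⟶ Y), len f = 1 ↔ IsAtomArrow f

/-- A subset of the arrows is a principal right ideal if it has the form `xC`. -/
def IsPrincipalRightIdeal (S : Set (CatArr C)) : Prop :=
  ∃ (U V : C) (x : U ⟶ V), S = rIdeal x

/-- The interval `[aC, bC]` of principal right ideals between `aC` and `bC`. -/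
def rInterval {X Y Z W : C} (a : X ⟶ Y) (b : Z ⟶ W) : Set (Set (CatArr C)) :=
  { S | IsPrincipalRightIdeal S ∧ rIdeal a ⊆ S ∧ S ⊆ rIdeal b }

/-- A left Rees category: left cancellative, right rigid, and each principal right
ideal is properly contained in only finitely many principal right ideals. -/
def IsLeftReesCategory (C : Type u) [Category.{v} C] : Prop :=
  LeftCancellativeCat C ∧ RightRigid C ∧
    ∀ ⦃X Y : C⦄ (a : X ⟶ Y),
      { S : Set (CatArr C) | IsPrincipalRightIdeal S ∧ rIdeal a ⊂ S }.Finite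

/-- A category is skeletal if every invertible arrow has equal domain and codomain. -/
def SkeletalCat (C : Type u) [Category.{v} C] : Prop :=
  ∀ ⦃X Y : C⦄ (g : X ⟶ Y), IsIso g → X = Y

/-- The composite `f 0 ≫ f 1 ≫ ⋯ ≫ f (n-1)` of a composable chain of arrows. -/
def chainComp : ∀ {n : ℕ} {X : Fin (n + 1) → C},
    (∀ i : Fin n, X i.castSucc ⟶ X i.succ) →
      (X ⟨0, Nat.succ_pos n⟩ ⟶ X ⟨n, Nat.lt_succ_self n⟩)
  | 0, _, _ => 𝟙 _
  | n + 1, X, f =>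
      f ⟨0, Nat.succ_pos n⟩ ≫ chainComp (X := fun i => X i.succ) (fun i => f i.succ)

lemma len_chain (L : LengthFunctor C) :
    ∀ {m : ℕ} {X : Fin (m + 1) → C} (a : ∀ i : Fin m, X i.castSucc ⟶ X i.succ),
      (∀ i, IsAtomArrow (a i)) → L.len (chainComp a) = m := by
  intro m
  induction m with
  | zero =>
    intro X a _
    exact (L.len_eq_zero_iff _).mpr (show IsIso (𝟙 _) from inferInstance)
  | succ m ih =>
    intro X a ha
    show L.len (a ⟨0, Nat.succ_pos m⟩ ≫
      chainComp (X := fun i => X i.succ) (fun i => a i.succ)) = m + 1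
    rw [L.len_comp, (L.len_eq_one_iff _).mpr (ha _), ih _ (fun i => ha i.succ)]
    omega

lemma len_congr (L : LengthFunctor C) {X Y : C} {f g : X ⟶ Y} (h : f = g) :
    L.len f = L.len g := by rw [h]

lemma len_iso (L : LengthFunctor C) {X Y : C} (f : X ⟶ Y) [IsIso f] : L.len f = 0 :=
  (L.len_eq_zero_iff f).mpr ‹_›

theorem interleaving_aux (L : LengthFunctor C) (hE : Equidivisible C) :
    ∀ (m : ℕ) {n : ℕ} {X : Fin (m + 1) → C} {Y : Fin (n + 1) → C}
      (a : ∀ i : Fin m, X i.castSucc ⟶ X i.succ)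
      (b : ∀ i : Fin n, Y i.castSucc ⟶ Y i.succ)
      (_ : ∀ i, IsAtomArrow (a i)) (_ : ∀ i, IsAtomArrow (b i))
      (g0 : Y ⟨0, Nat.succ_pos n⟩ ⟶ X ⟨0, Nat.succ_pos m⟩) (_ : IsIso g0)
      (h1 : X ⟨m, Nat.lt_succ_self m⟩ = Y ⟨n, Nat.lt_succ_self n⟩)
      (_ : g0 ≫ chainComp a = chainComp b ≫ eqToHom h1.symm),
      ∃ (h : m = n) (g : ∀ j : Fin (m + 1), Y (Fin.cast (congrArg Nat.succ h) j) ⟶ X j),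
        (∀ j, IsIso (g j)) ∧
        g ⟨0, Nat.succ_pos m⟩ = g0 ∧
        g ⟨m, Nat.lt_succ_self m⟩ = eqToHom (by subst h; exact h1.symm) ∧
        ∀ i : Fin m, g i.castSucc ≫ a i = b (Fin.cast h i) ≫ g i.succ := by
  intro m
  induction m with
  | zero =>
    intro n X Y a b ha hb g0 hg0 h1 hx
    -- chainComp a = 𝟙, so g0 = chainComp b ≫ eqToHom
    have hg0' : g0 = chainComp b ≫ eqToHom h1.symm := by
      rw [← hx, show chainComp a = 𝟙 _ from rfl, Category.comp_id]
    have hn : n = 0 := by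
      have := len_congr L hg0'
      rw [len_iso L g0, L.len_comp, len_chain L b hb, len_iso L (eqToHom h1.symm)] at this
      omega
    subst hn
    have hg0'' : g0 = eqToHom h1.symm := by
      rw [show chainComp b = 𝟙 _ from rfl, Category.id_comp] at hg0'
      exact hg0'
    refine ⟨rfl, fun j => Fin.cases g0 (fun i => i.elim0) j, ?_, ?_, ?_, fun i => i.elim0⟩
    · intro j
      induction j using Fin.cases with
      | zero => simpa using hg0
      | succ i => exact i.elim0
    · simp
    · simpa using hg0''
  | succ m ih =>
    intro n X Y a b ha hb g0 hg0 h1 hx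
    cases n with
    | zero =>
      exfalso
      have := len_congr L hx
      rw [L.len_comp, len_chain L a ha, L.len_comp, len_chain L b hb,
        len_iso L g0, len_iso L (eqToHom h1.symm)] at this
      omega
    | succ n =>
      -- split off the heads
      have hx' : (g0 ≫ a ⟨0, Nat.succ_pos m⟩) ≫ chainComp (X := fun i => X i.succ) (fun i => a i.succ)
          = b ⟨0, Nat.succ_pos n⟩ ≫ (chainComp (X := fun i => Y i.succ) (fun i => b i.succ) ≫ eqToHom h1.symm) := by
        have : g0 ≫ (a ⟨0, Nat.succ_pos m⟩ ≫ chainComp (X := fun i => X i.succ) (fun i => a i.succ))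
            = (b ⟨0, Nat.succ_pos n⟩ ≫ chainComp (X := fun i => Y i.succ) (fun i => b i.succ)) ≫ eqToHom h1.symm := hx
        simpa only [Category.assoc] using this
      have key : ∃ u : Y (Fin.succ ⟨0, Nat.succ_pos n⟩) ⟶ X (Fin.succ ⟨0, Nat.succ_pos m⟩),
          IsIso u ∧ g0 ≫ a ⟨0, Nat.succ_pos m⟩ = b ⟨0, Nat.succ_pos n⟩ ≫ u ∧
          u ≫ chainComp (X := fun i => X i.succ) (fun i => a i.succ)
            = chainComp (X := fun i => Y i.succ) (fun i => b i.succ) ≫ eqToHom h1.symm := by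
        rcases hE _ _ _ _ hx' with ⟨u, hu1, hu2⟩ | ⟨v, hv1, hv2⟩
        · have hlu : L.len u = 0 := by
            have := len_congr L hu1
            rw [L.len_comp, L.len_comp, len_iso L g0,
              (L.len_eq_one_iff _).mpr (ha _), (L.len_eq_one_iff _).mpr (hb _)] at this
            omega
          exact ⟨u, (L.len_eq_zero_iff u).mp hlu, hu1, hu2.symm⟩
        · have hlv : L.len v = 0 := by
            have := len_congr L hv1
            rw [L.len_comp, L.len_comp, len_iso L g0,
              (L.len_eq_one_iff _).mpr (ha _), (L.len_eq_one_iff _).mpr (hb _)] at this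
            omega
          have hv : IsIso v := (L.len_eq_zero_iff v).mp hlv
          refine ⟨inv v, inferInstance, ?_, ?_⟩
          · rw [hv1]; simp only [Category.assoc, IsIso.hom_inv_id, Category.comp_id]
          · rw [hv2]; simp only [IsIso.inv_hom_id_assoc]
      obtain ⟨u, hu_iso, hu1, hu2⟩ := key
      obtain ⟨h', g', hiso', hg'0, hg'm, hcomm'⟩ :=
        ih (X := fun i => X i.succ) (Y := fun i => Y i.succ)
          (fun i => a i.succ) (fun i => b i.succ)
          (fun i => ha i.succ) (fun i => hb i.succ) u hu_iso h1 hu2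
      refine ⟨congrArg Nat.succ h', fun j => Fin.cases g0 (fun i => g' i) j, ?_, ?_, ?_, ?_⟩
      · intro j
        induction j using Fin.cases with
        | zero => exact hg0
        | succ i => exact hiso' i
      · rfl
      · exact hg'm
      · intro i
        induction i using Fin.cases with
        | zero =>
          show g0 ≫ a ⟨0, Nat.succ_pos m⟩ = b ⟨0, Nat.succ_pos n⟩ ≫ g' ⟨0, Nat.succ_pos m⟩
          rw [hu1, hg'0]
        | succ i =>
          exact hcomm' i

/-- In a Levi category, if `x = a₁⋯a_m = b₁⋯b_n` with all `a_i, b_j` atoms,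
then `m = n` and there are invertible arrows interleaving the two factorizations:
`a₁ = b₁g₁`, `a_i = g_{i-1}⁻¹ b_i g_i`, `a_n = g_{n-1}⁻¹ b_n`.  The interleaving
isomorphisms are packaged as a family `g j : Y j ⟶ X j` (invertible for all `j`, and
equal to the canonical identifications at the two endpoints) satisfying
`g_{i} ≫ a_{i+1} = b_{i+1} ≫ g_{i+1}`. -/
theorem length_eq_and_interleaving_of_two_atom_factorizations
    (L : LengthFunctor C) (hE : Equidivisible C)
    (hni : ∃ (X Y : C) (a : X ⟶ Y), ¬ IsIso a)
    {m n : ℕ} {X : Fin (m + 1) → C} {Y : Fin (n + 1) → C}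
    (a : ∀ i : Fin m, X i.castSucc ⟶ X i.succ)
    (b : ∀ i : Fin n, Y i.castSucc ⟶ Y i.succ)
    (ha : ∀ i, IsAtomArrow (a i)) (hb : ∀ i, IsAtomArrow (b i))
    (h0 : X ⟨0, Nat.succ_pos m⟩ = Y ⟨0, Nat.succ_pos n⟩)
    (h1 : X ⟨m, Nat.lt_succ_self m⟩ = Y ⟨n, Nat.lt_succ_self n⟩)
    (hx : chainComp a = eqToHom h0 ≫ chainComp b ≫ eqToHom h1.symm) :
    m = n ∧
      ∃ (h : m = n) (g : ∀ j : Fin (m + 1), Y (Fin.cast (congrArg Nat.succ h) j) ⟶ X j),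
        (∀ j, IsIso (g j)) ∧
        g ⟨0, Nat.succ_pos m⟩ = eqToHom h0.symm ∧
        g ⟨m, Nat.lt_succ_self m⟩ = eqToHom (by subst h; exact h1.symm) ∧
        ∀ i : Fin m, g i.castSucc ≫ a i = b (Fin.cast h i) ≫ g i.succ := by
  have hx' : eqToHom h0.symm ≫ chainComp a = chainComp b ≫ eqToHom h1.symm := by
    rw [hx]; simp only [eqToHom_trans_assoc, eqToHom_refl, Category.id_comp]
  obtain ⟨h, g, h2, h3, h4, h5⟩ :=
    interleaving_aux L hE m a b ha hb (eqToHom h0.symm) inferInstance h1 hx'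
  exact ⟨h, h, g, h2, h3, h4, h5⟩
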